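/- arXiv:2401.00492 — 6 statements merged into one kernel-verified Lean document; each statement's English description precedes it below -/
import Mathlib

section
/- The Chebyshev polynomials of the second kind U_n satisfy: there exists a constant C > 0 such that for all x ∈ [0, 0.1) and all n ≥ 1, U_n(1+x) ≥ exp(C n √x); moreover |U_n(1+x)| ≤ 2n for all -1 ≤ x ≤ 0 and n ≥ 1. -/
open Polynomial

private lemma cosh_aux {s : ℝ} (h0 : 0 ≤ s) (h1 : s ≤ 1) :
    Real.exp s + Real.exp (-s) ≤ 2 + 2 * s ^ 2 := by
  have hb1 := Real.exp_bound' h0 h1 (n := 3) (by norm_num)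
  have habs : |(-s)| ≤ 1 := by rw [abs_neg, abs_of_nonneg h0]; exact h1
  have hb2 := Real.exp_bound habs (n := 3) (by norm_num)
  rw [abs_sub_le_iff] at hb2
  have hb2' := hb2.1
  simp only [Finset.sum_range_succ, Finset.sum_range_zero] at hb1 hb2'
  norm_num [Nat.factorial] at hb1 hb2'
  rw [abs_of_nonneg h0] at hb2'
  nlinarith [pow_le_one₀ h0 h1 (n := 3), sq_nonneg s, sq_nonneg (1 - s)]

private lemma chebU_key (y a : ℝ) (ha : 1 ≤ a) (hy : a + 1/a ≤ 2 * y) (n : ℕ) :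
    a ^ n ≤ (Chebyshev.U ℝ n).eval y ∧
      a * (Chebyshev.U ℝ n).eval y ≤ (Chebyshev.U ℝ (n + 1 : ℕ)).eval y := by
  have ha0 : 0 < a := lt_of_lt_of_le one_pos ha
  have hainv : 0 < 1/a := by positivity
  induction n with
  | zero =>
      have h01 : ((0 + 1 : ℕ) : ℤ) = 1 := by norm_num
      rw [h01]
      simp only [Nat.cast_zero, Polynomial.Chebyshev.U_zero,
        Polynomial.Chebyshev.U_one, eval_one, eval_mul, eval_ofNat, eval_X]
      constructor
      · norm_num
      · nlinarith
  | succ n ih =>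
      obtain ⟨ih1, ih2⟩ := ih
      have hUn1 : a ^ (n + 1) ≤ (Chebyshev.U ℝ (n + 1 : ℕ)).eval y := by
        calc a ^ (n + 1) = a * a ^ n := by ring
        _ ≤ a * (Chebyshev.U ℝ n).eval y := by
            exact mul_le_mul_of_nonneg_left ih1 ha0.le
        _ ≤ _ := ih2
      refine ⟨hUn1, ?_⟩
      have hrec := Polynomial.Chebyshev.U_add_two ℝ (n : ℤ)
      have heq : ((n + 1 + 1 : ℕ) : ℤ) = (n : ℤ) + 2 := by push_cast; ring
      have heq2 : ((n + 1 : ℕ) : ℤ) = (n : ℤ) + 1 := by push_cast; ring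
      rw [heq, heq2, hrec]
      rw [heq2] at hUn1 ih2
      simp only [eval_sub, eval_mul, eval_ofNat, eval_X]
      have hUn1pos : 0 ≤ (Chebyshev.U ℝ ((n : ℤ) + 1)).eval y := by
        calc (0:ℝ) ≤ a ^ (n+1) := by positivity
        _ ≤ _ := hUn1
      have hUnpos : 0 ≤ (Chebyshev.U ℝ (n : ℤ)).eval y := by
        have : (0:ℝ) ≤ a ^ n := by positivity
        exact le_trans this (by exact_mod_cast ih1)
      have h2y : 2 * y - a ≥ 1/a := by linarith
      have key : (1/a) * (Chebyshev.U ℝ ((n:ℤ) + 1)).eval y ≥ (Chebyshev.U ℝ (n:ℤ)).eval y := by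
        have := mul_le_mul_of_nonneg_left ih2 hainv.le
        have ha' : (1/a) * a = 1 := by field_simp
        nlinarith
      nlinarith [mul_le_mul_of_nonneg_right h2y.le hUn1pos]

private lemma chebU_abs_le (y : ℝ) (hy1 : -1 ≤ y) (hy2 : y ≤ 1) (n : ℕ) :
    |(Chebyshev.U ℝ n).eval y| ≤ n + 1 := by
  induction n with
  | zero => simp [Polynomial.Chebyshev.U_zero]
  | succ n ih =>
      have heq : ((n + 1 : ℕ) : ℤ) = (n : ℤ) + 1 := by push_cast; ring
      rw [heq, Polynomial.Chebyshev.U_eq_X_mul_U_add_T ℝ (n : ℤ)]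
      simp only [eval_add, eval_mul, eval_X]
      have hT : |(Chebyshev.T ℝ ((n:ℤ) + 1)).eval y| ≤ 1 := by
        have hc : Real.cos (Real.arccos y) = y := Real.cos_arccos hy1 hy2
        have := Polynomial.Chebyshev.T_real_cos (Real.arccos y) ((n:ℤ) + 1)
        rw [hc] at this
        rw [this]
        exact Real.abs_cos_le_one _
      have hyabs : |y| ≤ 1 := abs_le.mpr ⟨hy1, hy2⟩
      calc |y * (Chebyshev.U ℝ (n:ℤ)).eval y + (Chebyshev.T ℝ ((n:ℤ)+1)).eval y|
          ≤ |y * (Chebyshev.U ℝ (n:ℤ)).eval y| + |(Chebyshev.T ℝ ((n:ℤ)+1)).eval y| :=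
            abs_add_le _ _
        _ ≤ 1 * (n + 1) + 1 := by
            rw [abs_mul]
            gcongr
        _ ≤ (n + 1 : ℕ) + 1 := by push_cast; linarith

/-- Chebyshev polynomials of the second kind: exponential lower bound just above 1,
and linear bound on `[-1, 1]` (Lemma B.8). -/
theorem chebyshevU_bounds :
    ∃ C : ℝ, 0 < C ∧
      (∀ x : ℝ, x ∈ Set.Ico (0 : ℝ) 0.1 → ∀ n : ℕ, 1 ≤ n →
        Real.exp (C * n * Real.sqrt x) ≤ (Chebyshev.U ℝ n).eval (1 + x)) ∧
      (∀ x : ℝ, -1 ≤ x → x ≤ 0 → ∀ n : ℕ, 1 ≤ n →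
        |(Chebyshev.U ℝ n).eval (1 + x)| ≤ 2 * n) := by
  refine ⟨1, one_pos, ?_, ?_⟩
  · intro x hx n hn
    obtain ⟨hx0, hx1⟩ := hx
    set s := Real.sqrt x with hs
    have hs0 : 0 ≤ s := Real.sqrt_nonneg x
    have hs1 : s ≤ 1 := by
      rw [hs]
      exact Real.sqrt_le_one.mpr (by linarith)
    have hssq : s ^ 2 = x := Real.sq_sqrt hx0
    have ha : 1 ≤ Real.exp s := Real.one_le_exp hs0
    have hinv : 1 / Real.exp s = Real.exp (-s) := by
      rw [Real.exp_neg]; exact one_div _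
    have hcond : Real.exp s + 1 / Real.exp s ≤ 2 * (1 + x) := by
      rw [hinv]
      have := cosh_aux hs0 hs1
      nlinarith
    have hkey := (chebU_key (1 + x) (Real.exp s) ha hcond n).1
    calc Real.exp (1 * n * s) = Real.exp s ^ n := by
          rw [one_mul, Real.exp_nat_mul]
      _ ≤ _ := hkey
  · intro x hx1 hx2 n hn
    have := chebU_abs_le (1 + x) (by linarith) (by linarith) n
    have hn' : (1 : ℝ) ≤ n := by exact_mod_cast hn
    calc |(Chebyshev.U ℝ n).eval (1 + x)| ≤ n + 1 := this
      _ ≤ 2 * n := by linarith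
end

section
/- Fix y ∈ ℝ and t > 0. With n = ⌊tM⌋, one has lim_{M→∞} (1/n) U_n(1 + y/(2M²)) = sin(t√(-y))/(t√(-y)), where for y > 0 the right-hand side is interpreted as sinh(t√y)/(t√y) (i.e., via the analytic continuation of sin(z)/z). -/
open Polynomial Filter

theorem U_real_cosh (s : ℝ) (n : ℤ) :
    (Chebyshev.U ℝ n).eval (Real.cosh s) * Real.sinh s = Real.sinh (((n : ℝ) + 1) * s) := by
  have h := Chebyshev.U_complex_cos ((s : ℂ) * Complex.I) n
  rw [Complex.cos_mul_I, show ((n : ℂ) + 1) * ((s : ℂ) * Complex.I)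
      = ((((n : ℝ) + 1) * s : ℝ) : ℂ) * Complex.I by push_cast; ring,
    Complex.sin_mul_I, Complex.sin_mul_I, ← mul_assoc] at h
  have h2 := mul_right_cancel₀ Complex.I_ne_zero h
  exact_mod_cast h2

theorem tendsto_sin_div_self : Tendsto (fun x : ℝ => Real.sin x / x) (nhdsWithin 0 {0}ᶜ) (nhds 1) := by
  have h := Real.hasDerivAt_sin 0
  rw [hasDerivAt_iff_tendsto_slope] at h
  simpa [slope_fun_def, div_eq_inv_mul] using h

theorem tendsto_sinh_div_self : Tendsto (fun x : ℝ => Real.sinh x / x) (nhdsWithin 0 {0}ᶜ) (nhds 1) := by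
  have h := Real.hasDerivAt_sinh 0
  rw [hasDerivAt_iff_tendsto_slope] at h
  simpa [slope_fun_def, div_eq_inv_mul] using h

theorem tendsto_div_self_sin : Tendsto (fun x : ℝ => x / Real.sin x) (nhdsWithin 0 {0}ᶜ) (nhds 1) := by
  have h := tendsto_sin_div_self.inv₀ one_ne_zero
  simpa [inv_div] using h

theorem tendsto_div_self_sinh : Tendsto (fun x : ℝ => x / Real.sinh x) (nhdsWithin 0 {0}ᶜ) (nhds 1) := by
  have h := tendsto_sinh_div_self.inv₀ one_ne_zero
  simpa [inv_div] using h

theorem cheb_tendsto_floor_div (t : ℝ) :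
    Tendsto (fun M : ℕ => (⌊t * (M : ℝ)⌋ : ℝ) / (M : ℝ)) atTop (nhds t) := by
  apply tendsto_of_tendsto_of_tendsto_of_le_of_le'
    (g := fun M : ℕ => t - 1 / (M : ℝ)) (h := fun _ : ℕ => t)
  · simpa using tendsto_const_nhds.sub (tendsto_one_div_atTop_nhds_zero_nat (𝕜 := ℝ))
  · exact tendsto_const_nhds
  · filter_upwards [eventually_ge_atTop 1] with M hM
    have hM' : (0 : ℝ) < M := by exact_mod_cast Nat.lt_of_lt_of_le Nat.zero_lt_one hM
    have h1 : t * M - 1 ≤ (⌊t * (M : ℝ)⌋ : ℝ) := (Int.sub_one_lt_floor _).le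
    rw [show t - 1 / (M : ℝ) = (t * M - 1) / M by field_simp]
    gcongr
  · filter_upwards [eventually_ge_atTop 1] with M hM
    have hM' : (0 : ℝ) < M := by exact_mod_cast Nat.lt_of_lt_of_le Nat.zero_lt_one hM
    rw [div_le_iff₀ hM']
    exact Int.floor_le _

theorem cheb_tendsto_floor_atTop (t : ℝ) (ht : 0 < t) :
    Tendsto (fun M : ℕ => (⌊t * (M : ℝ)⌋ : ℝ)) atTop atTop := by
  apply tendsto_atTop_mono' _ _ (tendsto_atTop_add_const_right _ (-1)
    ((tendsto_natCast_atTop_atTop (R := ℝ)).const_mul_atTop ht))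
  filter_upwards with M
  have := Int.sub_one_lt_floor (t * (M : ℝ))
  linarith

theorem cheb_aux (t L : ℝ) (ht : 0 < t) (hL : 0 < L) (F : ℝ → ℝ) (hF : Continuous F)
    (hF' : Tendsto (fun x => F x / x) (nhdsWithin 0 {0}ᶜ) (nhds 1))
    (θ : ℕ → ℝ) (hθpos : ∀ᶠ M in atTop, 0 < θ M)
    (hMθ : Tendsto (fun M : ℕ => (M : ℝ) * θ M) atTop (nhds L)) :
    Tendsto (fun M : ℕ =>
        F (((⌊t * (M : ℝ)⌋ : ℝ) + 1) * θ M) / ((⌊t * (M : ℝ)⌋ : ℝ) * F (θ M)))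
      atTop (nhds (F (t * L) / (t * L))) := by
  have hθ0 : Tendsto θ atTop (nhds 0) := by
    have h := tendsto_one_div_atTop_nhds_zero_nat.mul hMθ
    rw [zero_mul] at h
    apply h.congr'
    filter_upwards [eventually_ge_atTop 1] with M hM
    have hM' : (M : ℝ) ≠ 0 := by positivity
    field_simp
  have hθ0' : Tendsto θ atTop (nhdsWithin 0 {0}ᶜ) := by
    rw [tendsto_nhdsWithin_iff]
    exact ⟨hθ0, hθpos.mono fun M h => by simpa using h.ne'⟩
  have hnθ : Tendsto (fun M : ℕ => (⌊t * (M : ℝ)⌋ : ℝ) * θ M) atTop (nhds (t * L)) := by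
    have h := (cheb_tendsto_floor_div t).mul hMθ
    apply h.congr'
    filter_upwards [eventually_ge_atTop 1] with M hM
    have hM' : (M : ℝ) ≠ 0 := by positivity
    field_simp
  have hnum : Tendsto (fun M : ℕ => F (((⌊t * (M : ℝ)⌋ : ℝ) + 1) * θ M)) atTop
      (nhds (F (t * L))) := by
    apply (hF.tendsto _).comp
    have h := hnθ.add hθ0
    rw [add_zero] at h
    exact h.congr fun M => by ring
  have hden : Tendsto (fun M : ℕ => (⌊t * (M : ℝ)⌋ : ℝ) * F (θ M)) atTop (nhds (t * L)) := by
    have h := hnθ.mul (hF'.comp hθ0')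
    rw [mul_one] at h
    apply h.congr'
    filter_upwards [hθpos] with M hθM
    simp only [Function.comp]
    field_simp
  exact hnum.div hden (by positivity)

theorem cheb_U_eval_one (n : ℤ) : (Chebyshev.U ℝ n).eval 1 = n + 1 := by
  induction n using Polynomial.Chebyshev.induct with
  | zero => simp
  | one => simp [Chebyshev.U_one]; norm_num
  | add_two n ih1 ih2 =>
    rw [Chebyshev.U_add_two]
    simp only [eval_sub, eval_mul, eval_ofNat, eval_X, ih1, ih2]
    push_cast; ring
  | neg_add_one n ih1 ih2 =>
    rw [Chebyshev.U_sub_one]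
    simp only [eval_sub, eval_mul, eval_ofNat, eval_X, ih1, ih2]
    push_cast; ring


/-- Lemma B.9: with `n = ⌊tM⌋`, `(1/n) U_n(1 + y/(2M²)) → sin(t√(-y))/(t√(-y))`
as `M → ∞`, where for `y > 0` the right-hand side is `sinh(t√y)/(t√y)` and for
`y = 0` it is `1`. -/
theorem chebyshevU_scaling_limit (y t : ℝ) (ht : 0 < t) :
    Tendsto
      (fun M : ℕ =>
        (1 / (⌊t * (M : ℝ)⌋ : ℝ)) *
          (Chebyshev.U ℝ ⌊t * (M : ℝ)⌋).eval (1 + y / (2 * (M : ℝ) ^ 2)))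
      atTop
      (nhds (if y < 0 then Real.sin (t * Real.sqrt (-y)) / (t * Real.sqrt (-y))
             else if y = 0 then 1
             else Real.sinh (t * Real.sqrt y) / (t * Real.sqrt y))) := by
  have hM2 : Tendsto (fun M : ℕ => 2 * (M : ℝ) ^ 2) atTop atTop := by
    have h := ((tendsto_natCast_atTop_atTop (R := ℝ)).atTop_mul_atTop₀
      (tendsto_natCast_atTop_atTop (R := ℝ))).const_mul_atTop (two_pos (α := ℝ))
    exact h.congr fun M => by ring
  have hn1 : ∀ᶠ M : ℕ in atTop, (1 : ℝ) ≤ (⌊t * (M : ℝ)⌋ : ℝ) :=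
    (cheb_tendsto_floor_atTop t ht).eventually_ge_atTop 1
  have hx1 : Tendsto (fun M : ℕ => 1 + y / (2 * (M : ℝ) ^ 2)) atTop (nhds 1) := by
    simpa using tendsto_const_nhds.add (Tendsto.div_atTop (tendsto_const_nhds (x := y)) hM2)
  rcases lt_trichotomy y 0 with hy | hy | hy
  · -- y < 0
    rw [if_pos hy]
    set a := -y with ha0
    have ha : 0 < a := by simp [ha0]; linarith
    set θ : ℕ → ℝ := fun M => Real.arccos (1 + y / (2 * (M : ℝ) ^ 2)) with hθdef
    have hsmall : ∀ᶠ M : ℕ in atTop, a / (2 * (M : ℝ) ^ 2) < 1 :=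
      (Tendsto.div_atTop (tendsto_const_nhds (x := a)) hM2).eventually_lt_const one_pos
    have hkey : ∀ᶠ M : ℕ in atTop, 0 < θ M ∧
        Real.cos (θ M) = 1 + y / (2 * (M : ℝ) ^ 2) ∧
        (M : ℝ) * θ M = Real.sqrt a * ((θ M / 2) / Real.sin (θ M / 2)) ∧
        θ M < Real.pi := by
      filter_upwards [hsmall, eventually_ge_atTop 1] with M h1 hM
      have hMr : (0 : ℝ) < M := by exact_mod_cast Nat.lt_of_lt_of_le Nat.zero_lt_one hM
      have hq : 0 < a / (2 * (M : ℝ) ^ 2) := by positivity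
      have hxy : 1 + y / (2 * (M : ℝ) ^ 2) = 1 - a / (2 * (M : ℝ) ^ 2) := by
        rw [show y = -a by rw [ha0]; ring]; ring
      have hxlt : 1 + y / (2 * (M : ℝ) ^ 2) < 1 := by rw [hxy]; linarith
      have hxge : (0 : ℝ) ≤ 1 + y / (2 * (M : ℝ) ^ 2) := by rw [hxy]; linarith
      have hcos : Real.cos (θ M) = 1 + y / (2 * (M : ℝ) ^ 2) :=
        Real.cos_arccos (by linarith) (by linarith)
      have hθpos : 0 < θ M := Real.arccos_pos.2 hxlt
      have hθlt : θ M < Real.pi := by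
        refine lt_of_le_of_ne (Real.arccos_le_pi _) fun h => ?_
        have := Real.arccos_eq_pi.1 h
        linarith
      refine ⟨hθpos, hcos, ?_, hθlt⟩
      have hsh : 0 < Real.sin (θ M / 2) :=
        Real.sin_pos_of_pos_of_lt_pi (by linarith) (by linarith [Real.pi_pos])
      have hdouble : Real.cos (θ M) = 1 - 2 * Real.sin (θ M / 2) ^ 2 := by
        have h1' := Real.cos_two_mul' (θ M / 2)
        have h2' := Real.sin_sq_add_cos_sq (θ M / 2)
        rw [show 2 * (θ M / 2) = θ M by ring] at h1'
        linarith
      have h3 : a / (2 * (M : ℝ) ^ 2) = 2 * Real.sin (θ M / 2) ^ 2 := by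
        rw [hxy] at hcos; linarith
      have hA : a = (2 * (M : ℝ) * Real.sin (θ M / 2)) ^ 2 := by
        have h4 := (div_eq_iff (by positivity : (2 * (M : ℝ) ^ 2) ≠ 0)).1 h3
        rw [h4]; ring
      have hsqrt : Real.sqrt a = 2 * (M : ℝ) * Real.sin (θ M / 2) := by
        rw [hA, Real.sqrt_sq (by positivity)]
      rw [hsqrt]; field_simp
    have hθpos : ∀ᶠ M in atTop, 0 < θ M := hkey.mono fun M h => h.1
    have hθ0 : Tendsto θ atTop (nhds 0) := by
      have h := (Real.continuous_arccos.tendsto 1).comp hx1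
      simpa [hθdef, Function.comp_def, Real.arccos_one] using h
    have hhalf : Tendsto (fun M => θ M / 2) atTop (nhdsWithin 0 {0}ᶜ) := by
      rw [tendsto_nhdsWithin_iff]
      constructor
      · simpa using hθ0.div_const 2
      · filter_upwards [hθpos] with M h
        simpa using (by positivity : (0 : ℝ) < θ M / 2).ne'
    have hMθ : Tendsto (fun M : ℕ => (M : ℝ) * θ M) atTop (nhds (Real.sqrt a)) := by
      have h := (tendsto_const_nhds (x := Real.sqrt a)).mul (tendsto_div_self_sin.comp hhalf)
      rw [mul_one] at h
      exact Tendsto.congr' (hkey.mono fun M hk => hk.2.2.1.symm) h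
    have main := cheb_aux t (Real.sqrt a) ht (Real.sqrt_pos.2 ha) Real.sin
      Real.continuous_sin tendsto_sin_div_self θ hθpos hMθ
    refine Tendsto.congr' ?_ main
    filter_upwards [hkey, hn1] with M hk hn
    obtain ⟨hθp, hcos, _, hθlt⟩ := hk
    have hsin : 0 < Real.sin (θ M) := Real.sin_pos_of_pos_of_lt_pi hθp hθlt
    have hU := Chebyshev.U_real_cos (θ M) ⌊t * (M : ℝ)⌋
    rw [hcos] at hU
    have heval : (Chebyshev.U ℝ ⌊t * (M : ℝ)⌋).eval (1 + y / (2 * (M : ℝ) ^ 2))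
        = Real.sin (((⌊t * (M : ℝ)⌋ : ℝ) + 1) * θ M) / Real.sin (θ M) := by
      rw [eq_div_iff hsin.ne']; exact hU
    rw [heval]
    have hnne : (⌊t * (M : ℝ)⌋ : ℝ) ≠ 0 := by linarith
    field_simp
  · -- y = 0
    subst hy
    rw [if_neg (lt_irrefl 0), if_pos rfl]
    have h := (cheb_tendsto_floor_atTop t ht).inv_tendsto_atTop
    have h1 : Tendsto (fun M : ℕ => 1 + ((⌊t * (M : ℝ)⌋ : ℝ))⁻¹) atTop (nhds 1) := by
      simpa using tendsto_const_nhds.add h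
    refine Tendsto.congr' ?_ h1
    filter_upwards [hn1] with M hn
    have hnne : (⌊t * (M : ℝ)⌋ : ℝ) ≠ 0 := by linarith
    simp only [zero_div, add_zero, cheb_U_eval_one]
    field_simp
  · -- y > 0
    rw [if_neg (not_lt.2 hy.le), if_neg hy.ne']
    set s : ℕ → ℝ := fun M =>
      Real.arsinh (Real.sqrt ((1 + y / (2 * (M : ℝ) ^ 2)) ^ 2 - 1)) with hsdef
    have hkey : ∀ᶠ M : ℕ in atTop, 0 < s M ∧
        Real.cosh (s M) = 1 + y / (2 * (M : ℝ) ^ 2) ∧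
        (M : ℝ) * s M = Real.sqrt y * ((s M / 2) / Real.sinh (s M / 2)) := by
      filter_upwards [eventually_ge_atTop 1] with M hM
      have hMr : (0 : ℝ) < M := by exact_mod_cast Nat.lt_of_lt_of_le Nat.zero_lt_one hM
      have hq : 0 < y / (2 * (M : ℝ) ^ 2) := by positivity
      set x := 1 + y / (2 * (M : ℝ) ^ 2) with hxdef
      have hx1' : 1 < x := by simp [hxdef]; positivity
      have hx2 : (0 : ℝ) ≤ x ^ 2 - 1 := by nlinarith
      have hcosh : Real.cosh (s M) = x := by
        rw [hsdef]
        simp only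
        rw [Real.cosh_arsinh, Real.sq_sqrt hx2, show 1 + (x ^ 2 - 1) = x ^ 2 by ring,
          Real.sqrt_sq (by linarith)]
      have hspos : 0 < s M := by
        rw [← Real.sinh_pos_iff, hsdef]
        simp only [Real.sinh_arsinh]
        exact Real.sqrt_pos.2 (by nlinarith)
      refine ⟨hspos, hcosh, ?_⟩
      have hsh : 0 < Real.sinh (s M / 2) := Real.sinh_pos_iff.2 (by linarith)
      have hdouble : Real.cosh (s M) = 1 + 2 * Real.sinh (s M / 2) ^ 2 := by
        have h1' := Real.cosh_two_mul (s M / 2)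
        have h2' := Real.cosh_sq (s M / 2)
        rw [show 2 * (s M / 2) = s M by ring] at h1'
        linarith
      have h3 : y / (2 * (M : ℝ) ^ 2) = 2 * Real.sinh (s M / 2) ^ 2 := by
        rw [hxdef] at hcosh; linarith
      have hA : y = (2 * (M : ℝ) * Real.sinh (s M / 2)) ^ 2 := by
        have h4 := (div_eq_iff (by positivity : (2 * (M : ℝ) ^ 2) ≠ 0)).1 h3
        rw [h4]; ring
      have hsqrt : Real.sqrt y = 2 * (M : ℝ) * Real.sinh (s M / 2) := by
        rw [hA, Real.sqrt_sq (by positivity)]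
      rw [hsqrt]; field_simp
    have hspos : ∀ᶠ M in atTop, 0 < s M := hkey.mono fun M h => h.1
    have hs0 : Tendsto s atTop (nhds 0) := by
      have hc : Continuous fun x : ℝ => Real.arsinh (Real.sqrt (x ^ 2 - 1)) :=
        Real.continuous_arsinh.comp (Real.continuous_sqrt.comp (by continuity))
      have h := (hc.tendsto 1).comp hx1
      simpa [Function.comp_def, hsdef] using h
    have hhalf : Tendsto (fun M => s M / 2) atTop (nhdsWithin 0 {0}ᶜ) := by
      rw [tendsto_nhdsWithin_iff]
      constructor
      · simpa using hs0.div_const 2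
      · filter_upwards [hspos] with M h
        simpa using (by positivity : (0 : ℝ) < s M / 2).ne'
    have hMs : Tendsto (fun M : ℕ => (M : ℝ) * s M) atTop (nhds (Real.sqrt y)) := by
      have h := (tendsto_const_nhds (x := Real.sqrt y)).mul (tendsto_div_self_sinh.comp hhalf)
      rw [mul_one] at h
      exact Tendsto.congr' (hkey.mono fun M hk => hk.2.2.symm) h
    have main := cheb_aux t (Real.sqrt y) ht (Real.sqrt_pos.2 hy) Real.sinh
      Real.continuous_sinh tendsto_sinh_div_self s hspos hMs
    refine Tendsto.congr' ?_ main
    filter_upwards [hkey, hn1] with M hk hn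
    obtain ⟨hsp, hcosh, _⟩ := hk
    have hsinh : 0 < Real.sinh (s M) := Real.sinh_pos_iff.2 hsp
    have hU := U_real_cosh (s M) ⌊t * (M : ℝ)⌋
    rw [hcosh] at hU
    have heval : (Chebyshev.U ℝ ⌊t * (M : ℝ)⌋).eval (1 + y / (2 * (M : ℝ) ^ 2))
        = Real.sinh (((⌊t * (M : ℝ)⌋ : ℝ) + 1) * s M) / Real.sinh (s M) := by
      rw [eq_div_iff hsinh.ne']; exact hU
    rw [heval]
    have hnne : (⌊t * (M : ℝ)⌋ : ℝ) ≠ 0 := by linarith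
    field_simp
end

section
/- For all real numbers x, y and all positive reals a, b, c, the inequality (a x² + b y² + c (x+y)²)/(ab + bc + ca) ≤ x²/b + y²/a holds. -/
/-- For all reals `x, y` and positive reals `a, b, c`:
`(a x² + b y² + c (x+y)²)/(ab + bc + ca) ≤ x²/b + y²/a`. -/
theorem quadratic_mean_inequality (x y a b c : ℝ) (ha : 0 < a) (hb : 0 < b) (hc : 0 < c) :
    (a * x ^ 2 + b * y ^ 2 + c * (x + y) ^ 2) / (a * b + b * c + c * a)
      ≤ x ^ 2 / b + y ^ 2 / a := by
  rw [div_add_div _ _ (ne_of_gt hb) (ne_of_gt ha),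
    div_le_div_iff₀ (by positivity) (by positivity)]
  nlinarith [sq_nonneg (a*x - b*y), mul_pos ha hb, mul_pos hb hc, mul_pos hc ha,
    sq_nonneg x, sq_nonneg y, mul_nonneg hc.le (sq_nonneg (a*x - b*y))]
end

section
/- Define the one-dimensional Jacobi theta function θ₁(x,t) = (1/√(2πt)) ∑_{n∈ℤ} exp(−(x+n)²/(2t)) for x ∈ ℝ, t > 0. Then there exist constants C₃, C₄ > 0 such that for all x ∈ (−1/2, 1/2] and all t > 0, θ₁(x,t) ≤ C₃ ( (1/√t) e^{−C₄ x²/t} + 1 ). -/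
open MeasureTheory Real Set

/-- The one-dimensional Jacobi theta function (wrapped Gaussian heat kernel on ℝ/ℤ). -/
noncomputable def theta1 (x t : ℝ) : ℝ :=
  (1 / Real.sqrt (2 * Real.pi * t)) * ∑' n : ℤ, Real.exp (-(x + n) ^ 2 / (2 * t))

lemma gauss_tail_summable {t : ℝ} (ht : 0 < t) :
    Summable (fun n : ℕ => Real.exp (-((n : ℝ) + 1) ^ 2 / (8 * t))) ∧
    (∑' n : ℕ, Real.exp (-((n : ℝ) + 1) ^ 2 / (8 * t))) ≤ Real.sqrt (2 * Real.pi * t) := by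
  set b : ℝ := 1 / (8 * t) with hb
  have hbpos : 0 < b := by positivity
  have hsum : ∀ N : ℕ, ∑ i ∈ Finset.range N, Real.exp (-((i : ℝ) + 1) ^ 2 / (8 * t))
      ≤ Real.sqrt (2 * Real.pi * t) := by
    intro N
    have hanti : AntitoneOn (fun s : ℝ => Real.exp (-b * s ^ 2)) (Icc (0:ℝ) (0 + N)) := by
      intro a ha c hc hac
      apply Real.exp_le_exp.2
      have ha0 : 0 ≤ a := ha.1
      have hsq : a ^ 2 ≤ c ^ 2 := by nlinarith
      nlinarith [mul_le_mul_of_nonneg_left hsq hbpos.le]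
    have h1 := hanti.sum_le_integral
    have heq : ∀ i : ℕ, Real.exp (-((i : ℝ) + 1) ^ 2 / (8 * t))
        = (fun s : ℝ => Real.exp (-b * s ^ 2)) ((0:ℝ) + ((i : ℕ) + 1 : ℕ)) := by
      intro i
      simp only [hb]
      push_cast
      ring_nf
    have h2 : (∑ i ∈ Finset.range N, Real.exp (-((i : ℝ) + 1) ^ 2 / (8 * t)))
        ≤ ∫ s in (0:ℝ)..(0 + N), Real.exp (-b * s ^ 2) := by
      calc (∑ i ∈ Finset.range N, Real.exp (-((i : ℝ) + 1) ^ 2 / (8 * t)))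
          = ∑ i ∈ Finset.range N, (fun s : ℝ => Real.exp (-b * s ^ 2)) ((0:ℝ) + ((i : ℕ) + 1 : ℕ)) := by
            exact Finset.sum_congr rfl fun i _ => heq i
        _ ≤ _ := h1
    have h3 : (∫ s in (0:ℝ)..(0 + N), Real.exp (-b * s ^ 2))
        ≤ ∫ s in Ioi (0:ℝ), Real.exp (-b * s ^ 2) := by
      rw [zero_add, intervalIntegral.integral_of_le (by positivity)]
      apply setIntegral_mono_set
      · exact (integrable_exp_neg_mul_sq hbpos).integrableOn
      · filter_upwards with s using Real.exp_nonneg _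
      · filter_upwards with s hs using hs.1
    have h4 : (∫ s in Ioi (0:ℝ), Real.exp (-b * s ^ 2)) = Real.sqrt (2 * Real.pi * t) := by
      rw [integral_gaussian_Ioi, hb, one_div]
      rw [show Real.pi / (8 * t)⁻¹ = 2 ^ 2 * (2 * Real.pi * t) by field_simp; ring]
      rw [Real.sqrt_mul (by positivity), Real.sqrt_sq (by norm_num)]
      ring
    calc _ ≤ _ := h2
      _ ≤ _ := h3
      _ = _ := h4
  have hnn : ∀ n : ℕ, 0 ≤ Real.exp (-((n : ℝ) + 1) ^ 2 / (8 * t)) :=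
    fun n => Real.exp_nonneg _
  have hS : Summable (fun n : ℕ => Real.exp (-((n : ℝ) + 1) ^ 2 / (8 * t))) :=
    summable_of_sum_range_le hnn hsum
  exact ⟨hS, Summable.tsum_le_of_sum_range_le hS hsum⟩

/-- Uniform upper bound for the periodic heat kernel:
`θ₁(x,t) ≤ C₃((1/√t) e^{−C₄x²/t} + 1)` for `x ∈ (−1/2, 1/2]`, `t > 0`. -/
theorem theta1_upper_bound :
    ∃ C₃ : ℝ, 0 < C₃ ∧ ∃ C₄ : ℝ, 0 < C₄ ∧
      ∀ x : ℝ, x ∈ Set.Ioc (-(1 : ℝ) / 2) (1 / 2) → ∀ t : ℝ, 0 < t →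
        theta1 x t ≤ C₃ * ((1 / Real.sqrt t) * Real.exp (-C₄ * x ^ 2 / t) + 1) := by
  refine ⟨2, by norm_num, 1/2, by norm_num, fun x hx t ht => ?_⟩
  obtain ⟨hg, hgsum⟩ := gauss_tail_summable ht
  set f : ℤ → ℝ := fun n => Real.exp (-(x + n) ^ 2 / (2 * t)) with hf
  set g : ℕ → ℝ := fun n => Real.exp (-((n : ℝ) + 1) ^ 2 / (8 * t)) with hgdef
  -- pointwise bounds for the tails
  have hpos : ∀ n : ℕ, f ((n : ℤ) + 1) ≤ g n := by
    intro n
    have hx1 : -(1:ℝ)/2 < x := hx.1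
    have key : ((n:ℝ)+1)^2/4 ≤ (x + (((n : ℤ) + 1 : ℤ) : ℝ))^2 := by
      push_cast
      have h1 : ((n:ℝ)+1)/2 ≤ x + ((n:ℝ)+1) := by linarith
      have h0 : (0:ℝ) ≤ ((n:ℝ)+1)/2 := by positivity
      nlinarith [mul_le_mul h1 h1 h0 (h0.trans h1)]
    simp only [hf, hgdef]
    apply Real.exp_le_exp.2
    rw [div_le_div_iff₀ (by positivity) (by positivity)]
    nlinarith [key, ht.le]
  have hneg : ∀ n : ℕ, f (-((n : ℤ) + 1)) ≤ g n := by
    intro n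
    have hx2 : x ≤ 1/2 := hx.2
    have key : ((n:ℝ)+1)^2/4 ≤ (x + ((-((n : ℤ) + 1) : ℤ) : ℝ))^2 := by
      push_cast
      have h1 : ((n:ℝ)+1)/2 ≤ ((n:ℝ)+1) - x := by linarith [Nat.cast_nonneg (α := ℝ) n]
      have h0 : (0:ℝ) ≤ ((n:ℝ)+1)/2 := by positivity
      nlinarith [mul_le_mul h1 h1 h0 (h0.trans h1)]
    simp only [hf, hgdef]
    apply Real.exp_le_exp.2
    rw [div_le_div_iff₀ (by positivity) (by positivity)]
    nlinarith [key, ht.le]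
  have hfnn : ∀ n : ℤ, 0 ≤ f n := fun n => Real.exp_nonneg _
  -- summability
  have hSpos1 : Summable (fun n : ℕ => f ((n : ℤ) + 1)) :=
    Summable.of_nonneg_of_le (fun n => hfnn _) hpos hg
  have hSpos : Summable (fun n : ℕ => f (n : ℤ)) := by
    rw [← summable_nat_add_iff 1]
    exact hSpos1.congr fun n => congrArg f (by push_cast; ring)
  have hSneg : Summable (fun n : ℕ => f (-((n : ℤ) + 1))) :=
    Summable.of_nonneg_of_le (fun n => hfnn _) hneg hg
  -- split the integer sum
  have hsplit : (∑' n : ℤ, f n)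
      = (∑' n : ℕ, f (n : ℤ)) + ∑' n : ℕ, f (-((n : ℤ) + 1)) :=
    tsum_of_nat_of_neg_add_one hSpos hSneg
  have hzero : (∑' n : ℕ, f (n : ℤ)) = f 0 + ∑' n : ℕ, f ((n : ℤ) + 1) := by
    have h := Summable.tsum_eq_zero_add hSpos
    simpa using h
  have hposle : (∑' n : ℕ, f ((n : ℤ) + 1)) ≤ Real.sqrt (2 * Real.pi * t) :=
    (Summable.tsum_le_tsum hpos hSpos1 hg).trans hgsum
  have hnegle : (∑' n : ℕ, f (-((n : ℤ) + 1))) ≤ Real.sqrt (2 * Real.pi * t) :=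
    (Summable.tsum_le_tsum hneg hSneg hg).trans hgsum
  have htotal : (∑' n : ℤ, f n)
      ≤ Real.exp (-x ^ 2 / (2 * t)) + 2 * Real.sqrt (2 * Real.pi * t) := by
    rw [hsplit, hzero]
    have hf0 : f 0 = Real.exp (-x ^ 2 / (2 * t)) := by simp [hf]
    linarith [hposle, hnegle, hf0.le, hf0.ge]
  -- assemble
  have hsq : 0 < Real.sqrt (2 * Real.pi * t) := Real.sqrt_pos.2 (by positivity)
  have hst : 0 < Real.sqrt t := Real.sqrt_pos.2 ht
  have hle1 : 1 / Real.sqrt (2 * Real.pi * t) ≤ 1 / Real.sqrt t := by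
    apply one_div_le_one_div_of_le hst
    apply Real.sqrt_le_sqrt
    nlinarith [Real.pi_gt_three, ht.le]
  have hexp_eq : Real.exp (-x ^ 2 / (2 * t)) = Real.exp (-(1/2) * x ^ 2 / t) := by
    congr 1
    ring
  have : theta1 x t ≤ (1 / Real.sqrt (2 * Real.pi * t)) * Real.exp (-x ^ 2 / (2 * t)) + 2 := by
    unfold theta1
    calc (1 / Real.sqrt (2 * Real.pi * t)) * ∑' n : ℤ, Real.exp (-(x + n) ^ 2 / (2 * t))
        = (1 / Real.sqrt (2 * Real.pi * t)) * ∑' n : ℤ, f n := rfl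
      _ ≤ (1 / Real.sqrt (2 * Real.pi * t)) *
          (Real.exp (-x ^ 2 / (2 * t)) + 2 * Real.sqrt (2 * Real.pi * t)) :=
          mul_le_mul_of_nonneg_left htotal (by positivity)
      _ = (1 / Real.sqrt (2 * Real.pi * t)) * Real.exp (-x ^ 2 / (2 * t)) + 2 := by
          field_simp
  calc theta1 x t ≤ (1 / Real.sqrt (2 * Real.pi * t)) * Real.exp (-x ^ 2 / (2 * t)) + 2 := this
    _ ≤ (1 / Real.sqrt t) * Real.exp (-(1/2) * x ^ 2 / t) + 2 := by
        rw [← hexp_eq]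
        have := mul_le_mul_of_nonneg_right hle1 (Real.exp_nonneg (-x ^ 2 / (2 * t)))
        linarith
    _ ≤ 2 * ((1 / Real.sqrt t) * Real.exp (-(1/2) * x ^ 2 / t) + 1) := by
        have : 0 ≤ (1 / Real.sqrt t) * Real.exp (-(1/2) * x ^ 2 / t) := by positivity
        linarith
end

section
/- For fixed k ∈ ℤ (representing a residue class) and x, y ∈ ℝ, τ₁, τ₂ > 0, one has ∑_{m₁+m₂=k, m₁,m₂∈ℤ} e^{−(m₁+x)²/(2τ₁) − (m₂+y)²/(2τ₂)} ≤ e^{−(k+x+y)²/(2(τ₁+τ₂))} · ∑_{m∈ℤ} e^{−(τ₁+τ₂) m²/(2τ₁τ₂)}. -/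
open Real Complex

lemma summable_gauss_int (t : ℝ) (ht : 0 < t) :
    Summable (fun n : ℤ => Real.exp (-t * (n : ℝ) ^ 2)) := by
  have key : Summable (fun n : ℕ => Real.exp (-t * (n : ℝ) ^ 2)) := by
    have hle : ∀ n : ℕ, Real.exp (-t * (n : ℝ) ^ 2) ≤ Real.exp (-t) ^ n := by
      intro n
      rw [← Real.exp_nat_mul]
      apply Real.exp_le_exp.mpr
      have : (n : ℝ) ≤ (n : ℝ) ^ 2 := by
        rcases Nat.eq_zero_or_pos n with h | h
        · simp [h]
        · nlinarith [(Nat.one_le_cast (α := ℝ)).mpr h]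
      nlinarith
    exact Summable.of_nonneg_of_le (fun n => (Real.exp_pos _).le) hle
      (summable_geometric_of_lt_one (Real.exp_pos _).le
        (Real.exp_lt_one_iff.mpr (by linarith)))
  apply Summable.of_nat_of_neg <;> simpa using key

lemma tsum_gauss_shift_le_aux (a c : ℝ) (ha : 0 < a) :
    (∑' m : ℤ, Real.exp (-π * a * ((m : ℝ) + c) ^ 2)) ≤
      ∑' m : ℤ, Real.exp (-π * a * (m : ℝ) ^ 2) := by
  have ha' : ((a : ℂ)) ≠ 0 := by exact_mod_cast ha.ne'
  set b : ℂ := -((a : ℂ) * (c : ℂ)) with hb_def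
  have h1 := Complex.tsum_exp_neg_quadratic (a := (a : ℂ)) (by simpa using ha) b
  have key : ((∑' m : ℤ, Real.exp (-π * a * ((m : ℝ) + c) ^ 2) : ℝ) : ℂ) =
      Complex.exp (-(π : ℂ) * (a : ℂ) * (c : ℂ) ^ 2) *
        (1 / (a : ℂ) ^ (1 / 2 : ℂ) * ∑' n : ℤ, Complex.exp (-π / a * (n + I * b) ^ 2)) := by
    rw [← h1, ← tsum_mul_left, Complex.ofReal_tsum]
    apply tsum_congr
    intro n
    rw [Complex.ofReal_exp, ← Complex.exp_add]
    congr 1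
    rw [hb_def]
    push_cast
    ring
  have hterm : ∀ n : ℤ, ‖Complex.exp (-π / a * (n + I * b) ^ 2)‖ =
      Real.exp (π * a * c ^ 2) * Real.exp (-(π / a) * (n : ℝ) ^ 2) := by
    intro n
    rw [Complex.norm_exp, ← Real.exp_add]
    congr 1
    have hz : -(π : ℂ) / a * ((n : ℂ) + I * b) ^ 2 =
        ((π * a * c ^ 2 + -(π / a) * (n : ℝ) ^ 2 : ℝ) : ℂ) + ((2 * π * c * n : ℝ) : ℂ) * I := by
      rw [hb_def]
      push_cast
      field_simp
      linear_combination (-(a : ℂ) ^ 2 * (c : ℂ) ^ 2) * Complex.I_sq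
    rw [hz]
    simp [← Complex.ofReal_pow]
  have hsum_norm : Summable (fun n : ℤ => ‖Complex.exp (-π / a * (n + I * b) ^ 2)‖) := by
    simp_rw [hterm]
    exact (summable_gauss_int (π / a) (div_pos Real.pi_pos ha)).mul_left _
  have hnorm : (∑' m : ℤ, Real.exp (-π * a * ((m : ℝ) + c) ^ 2)) =
      ‖((∑' m : ℤ, Real.exp (-π * a * ((m : ℝ) + c) ^ 2) : ℝ) : ℂ)‖ := by
    rw [Complex.norm_real, Real.norm_eq_abs,
      _root_.abs_of_nonneg (tsum_nonneg fun m => (Real.exp_pos _).le)]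
  rw [hnorm, key]
  have hpow : ‖1 / (a : ℂ) ^ (1 / 2 : ℂ)‖ = 1 / a ^ (1 / 2 : ℝ) := by
    rw [show (1 / 2 : ℂ) = ((1 / 2 : ℝ) : ℂ) by norm_num, ← Complex.ofReal_cpow ha.le]
    rw [norm_div, Complex.norm_real, Real.norm_eq_abs, norm_one,
      _root_.abs_of_nonneg (Real.rpow_nonneg ha.le _)]
  have hea : ‖Complex.exp (-(π : ℂ) * (a : ℂ) * (c : ℂ) ^ 2)‖ = Real.exp (-(π * a * c ^ 2)) := by
    rw [show -(π : ℂ) * (a : ℂ) * (c : ℂ) ^ 2 = ((-(π * a * c ^ 2) : ℝ) : ℂ) by push_cast; ring,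
      ← Complex.ofReal_exp, Complex.norm_real, Real.norm_eq_abs,
      _root_.abs_of_nonneg (Real.exp_pos _).le]
  calc ‖Complex.exp (-(π : ℂ) * (a : ℂ) * (c : ℂ) ^ 2) *
        (1 / (a : ℂ) ^ (1 / 2 : ℂ) * ∑' n : ℤ, Complex.exp (-π / a * (n + I * b) ^ 2))‖
      = Real.exp (-(π * a * c ^ 2)) * (1 / a ^ (1 / 2 : ℝ) *
          ‖∑' n : ℤ, Complex.exp (-π / a * (n + I * b) ^ 2)‖) := by
        rw [norm_mul, norm_mul, hpow, hea]
    _ ≤ Real.exp (-(π * a * c ^ 2)) * (1 / a ^ (1 / 2 : ℝ) *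
          ∑' n : ℤ, ‖Complex.exp (-π / a * (n + I * b) ^ 2)‖) := by
        refine mul_le_mul_of_nonneg_left (mul_le_mul_of_nonneg_left
          (norm_tsum_le_tsum_norm hsum_norm) ?_) (Real.exp_pos _).le
        positivity
    _ = Real.exp (-(π * a * c ^ 2)) * (1 / a ^ (1 / 2 : ℝ) *
          (Real.exp (π * a * c ^ 2) * ∑' n : ℤ, Real.exp (-(π / a) * (n : ℝ) ^ 2))) := by
        rw [tsum_congr hterm, tsum_mul_left]
    _ = 1 / a ^ (1 / 2 : ℝ) * ∑' n : ℤ, Real.exp (-π / a * (n : ℝ) ^ 2) := by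
        rw [Real.exp_neg]
        have := (Real.exp_pos (π * a * c ^ 2)).ne'
        field_simp
    _ = ∑' n : ℤ, Real.exp (-π * a * (n : ℝ) ^ 2) := (Real.tsum_exp_neg_mul_int_sq ha).symm

/-- The shifted Gaussian lattice sum is maximized at zero shift. -/
lemma tsum_gauss_shift_le (α c : ℝ) (hα : 0 < α) :
    (∑' m : ℤ, Real.exp (-α * ((m : ℝ) + c) ^ 2)) ≤ ∑' m : ℤ, Real.exp (-α * (m : ℝ) ^ 2) := by
  have hπ : -π * (α / π) = -α := by field_simp
  have := tsum_gauss_shift_le_aux (α / π) c (div_pos hα Real.pi_pos)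
  simpa only [hπ] using this

/-- Slice bound for products of Gaussian lattice sums: for a fixed residue `k`,
`∑_{m₁+m₂=k} e^{−(m₁+x)²/(2τ₁) − (m₂+y)²/(2τ₂)}
  ≤ e^{−(k+x+y)²/(2(τ₁+τ₂))} ∑_{m∈ℤ} e^{−(τ₁+τ₂)m²/(2τ₁τ₂)}`. -/
theorem gaussian_lattice_slice_bound (k : ℤ) (x y τ₁ τ₂ : ℝ) (hτ₁ : 0 < τ₁) (hτ₂ : 0 < τ₂) :
    (∑' m : ℤ, Real.exp (-(((k - m : ℤ) : ℝ) + x) ^ 2 / (2 * τ₁)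
        - ((m : ℝ) + y) ^ 2 / (2 * τ₂)))
      ≤ Real.exp (-((k : ℝ) + x + y) ^ 2 / (2 * (τ₁ + τ₂))) *
          ∑' m : ℤ, Real.exp (-(τ₁ + τ₂) * (m : ℝ) ^ 2 / (2 * τ₁ * τ₂)) := by
  set α : ℝ := (τ₁ + τ₂) / (2 * τ₁ * τ₂) with hα_def
  have hα : 0 < α := by positivity
  set c : ℝ := (τ₁ * y - τ₂ * ((k : ℝ) + x)) / (τ₁ + τ₂) with hc_def
  have hsum : 0 < τ₁ + τ₂ := by linarith
  have hterm : ∀ m : ℤ, Real.exp (-(((k - m : ℤ) : ℝ) + x) ^ 2 / (2 * τ₁)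
        - ((m : ℝ) + y) ^ 2 / (2 * τ₂)) =
      Real.exp (-((k : ℝ) + x + y) ^ 2 / (2 * (τ₁ + τ₂))) *
        Real.exp (-α * ((m : ℝ) + c) ^ 2) := by
    intro m
    rw [← Real.exp_add]
    congr 1
    rw [hα_def, hc_def]
    push_cast
    field_simp
    ring
  rw [tsum_congr hterm, tsum_mul_left]
  have hrhs : ∀ m : ℤ, Real.exp (-(τ₁ + τ₂) * (m : ℝ) ^ 2 / (2 * τ₁ * τ₂)) =
      Real.exp (-α * (m : ℝ) ^ 2) := by
    intro m
    congr 1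
    rw [hα_def]
    field_simp
  rw [tsum_congr hrhs]
  exact mul_le_mul_of_nonneg_left (tsum_gauss_shift_le α c hα) (Real.exp_pos _).le
end

section
/- Let h(z) and g(z) be functions holomorphic on the disk |z| < r with r ≥ 1−ε for some ε ∈ (0,1), with 1/h(z) = ∑ h_n z^n and 1/g(z) = ∑ g_n z^n. Suppose there are constants α, β with 0 ≤ β ≤ 1 and β < 2α − 1, and δ₁, δ₂ > 0 such that |h(z)|, |g(z)| ≥ δ₁|z−1|^α and |h(z) − g(z)| ≤ δ₂|z−1|^β for all |z| ≤ 1−ε. Then for every n, |h_n − g_n| ≤ (δ₂/((2α−β−1)δ₁²)) · 2^{α−1−β/2} · (1−ε)^{−n−1/2} · ε^{β−2α+1}. -/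
open Real intervalIntegral Set Filter Topology

private lemma cc_ftc_bound {a c γ : ℝ} (ha : 0 < a) (hc : 0 < c) (hγ : 1 < γ)
    {b : ℝ} (hb : 0 ≤ b) :
    ∫ θ in (0:ℝ)..b, (a + c * θ) ^ (-γ) ≤ a ^ (1 - γ) / (c * (γ - 1)) := by
  have hpos : ∀ θ ∈ Set.uIcc (0:ℝ) b, 0 < a + c * θ := by
    intro θ hθ
    rw [Set.uIcc_of_le hb] at hθ
    nlinarith [hθ.1]
  have hder : ∀ θ ∈ Set.uIcc (0:ℝ) b,
      HasDerivAt (fun t => (a + c * t) ^ (1 - γ) / (c * (1 - γ))) ((a + c * θ) ^ (-γ)) θ := by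
    intro θ hθ
    have h1 : HasDerivAt (fun t : ℝ => a + c * t) c θ := by
      simpa using ((hasDerivAt_id θ).const_mul c).const_add a
    have h2 := (Real.hasDerivAt_rpow_const
      (x := a + c * θ) (p := 1 - γ) (Or.inl (hpos θ hθ).ne')).comp θ h1
    have h3 := h2.div_const (c * (1 - γ))
    refine h3.congr_deriv ?_
    have hγ1 : (1:ℝ) - γ ≠ 0 := by linarith
    rw [show (1:ℝ) - γ - 1 = -γ by ring]
    field_simp
  have hint : IntervalIntegrable (fun θ => (a + c * θ) ^ (-γ)) MeasureTheory.volume 0 b := by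
    apply ContinuousOn.intervalIntegrable
    exact (((continuousOn_const).add (continuousOn_const.mul continuousOn_id)).rpow_const
      (fun θ hθ => Or.inl (hpos θ hθ).ne'))
  rw [intervalIntegral.integral_eq_sub_of_hasDerivAt hder hint]
  have h0 : (0:ℝ) < a + c * b := by nlinarith
  have hden : c * (1 - γ) < 0 := by nlinarith
  have hnum : (0:ℝ) < (a + c * b) ^ (1 - γ) := Real.rpow_pos_of_pos h0 _
  have h1 : (a + c * b) ^ (1 - γ) / (c * (1 - γ)) ≤ 0 := div_nonpos_of_nonneg_of_nonpos hnum.le hden.le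
  have h2 : (a + c * 0) ^ (1 - γ) / (c * (1 - γ)) = -(a ^ (1 - γ) / (c * (γ - 1))) := by
    rw [mul_zero, add_zero, show c * (1 - γ) = -(c * (γ - 1)) by ring, div_neg]
  rw [h2]
  linarith

private lemma cc_pointwise {ρ : ℝ} (h0 : 0 < ρ) (h1 : ρ < 1) {θ : ℝ} (hθ : |θ| ≤ π) :
    (1 - ρ) + (2 * Real.sqrt ρ / π) * |θ| ≤ Real.sqrt 2 * ‖circleMap 0 ρ θ - 1‖ := by
  have hπ := Real.pi_pos
  have hsq : Real.sqrt ρ ^ 2 = ρ := Real.sq_sqrt h0.le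
  have hsqnn : 0 ≤ Real.sqrt ρ := Real.sqrt_nonneg ρ
  have hN2 : ‖circleMap 0 ρ θ - 1‖ ^ 2 = ρ ^ 2 - 2 * ρ * Real.cos θ + 1 := by
    rw [Complex.sq_norm, Complex.normSq_apply]
    simp only [circleMap, Complex.ofReal_zero, zero_add, Complex.sub_re, Complex.sub_im,
      Complex.mul_re, Complex.mul_im, Complex.ofReal_re, Complex.ofReal_im,
      Complex.exp_ofReal_mul_I_re, Complex.exp_ofReal_mul_I_im, Complex.one_re, Complex.one_im]
    nlinarith [Real.sin_sq_add_cos_sq θ]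
  have hcos : Real.cos θ ≤ 1 - 2 / π ^ 2 * θ ^ 2 := Real.cos_le_one_sub_mul_cos_sq hθ
  have hLnn : 0 ≤ (1 - ρ) + (2 * Real.sqrt ρ / π) * |θ| := by
    have : 0 ≤ (2 * Real.sqrt ρ / π) * |θ| := by positivity
    linarith
  have key : ((1 - ρ) + (2 * Real.sqrt ρ / π) * |θ|) ^ 2 ≤ 2 * ‖circleMap 0 ρ θ - 1‖ ^ 2 := by
    rw [hN2]
    have habs : |θ| ^ 2 = θ ^ 2 := sq_abs θ
    have hamgm : 2 * (1 - ρ) * ((2 * Real.sqrt ρ / π) * |θ|) ≤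
        (1 - ρ) ^ 2 + ((2 * Real.sqrt ρ / π) * |θ|) ^ 2 := by nlinarith [sq_nonneg ((1-ρ) - (2 * Real.sqrt ρ / π) * |θ|)]
    have hc2 : ((2 * Real.sqrt ρ / π) * |θ|) ^ 2 = 4 * ρ * θ ^ 2 / π ^ 2 := by
      field_simp
      nlinarith [hsq, habs]
    have h4 : 2 * ρ * Real.cos θ ≤ 2 * ρ - 4 * ρ * θ ^ 2 / π ^ 2 := by
      have h5 := mul_le_mul_of_nonneg_left hcos (by positivity : (0:ℝ) ≤ 2 * ρ)
      have h6 : 2 * ρ * (1 - 2 / π ^ 2 * θ ^ 2) = 2 * ρ - 4 * ρ * θ ^ 2 / π ^ 2 := by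
        field_simp; ring
      linarith [h6 ▸ h5]
    nlinarith [hamgm, hc2, h4]
  calc (1 - ρ) + (2 * Real.sqrt ρ / π) * |θ|
      = Real.sqrt (((1 - ρ) + (2 * Real.sqrt ρ / π) * |θ|) ^ 2) := (Real.sqrt_sq hLnn).symm
    _ ≤ Real.sqrt (2 * ‖circleMap 0 ρ θ - 1‖ ^ 2) := Real.sqrt_le_sqrt key
    _ = Real.sqrt 2 * ‖circleMap 0 ρ θ - 1‖ := by
        rw [Real.sqrt_mul (by norm_num), Real.sqrt_sq (norm_nonneg _)]

private lemma cc_circle_integral_bound {ρ γ : ℝ} (hρ0 : 0 < ρ) (hρ1 : ρ < 1) (hγ : 1 < γ) :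
    ∫ θ in (0:ℝ)..(2*π), ‖circleMap 0 ρ θ - 1‖ ^ (-γ) ≤
      2 ^ (γ/2) * (π / (γ - 1)) * (1 - ρ) ^ (1 - γ) / Real.sqrt ρ := by
  have hπ := Real.pi_pos
  set a : ℝ := 1 - ρ with ha_def
  set c : ℝ := 2 * Real.sqrt ρ / π with hc_def
  have ha : 0 < a := by simp only [ha_def]; linarith
  have hc : 0 < c := by
    have : 0 < Real.sqrt ρ := Real.sqrt_pos.2 hρ0
    positivity
  have hNpos : ∀ θ : ℝ, 0 < ‖circleMap 0 ρ θ - 1‖ := by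
    intro θ
    rw [norm_pos_iff, sub_ne_zero]
    intro hmap
    have := norm_circleMap_zero ρ θ
    rw [hmap] at this
    simp only [norm_one] at this
    rw [abs_of_pos hρ0] at this
    linarith
  have hcont1 : Continuous fun θ => ‖circleMap 0 ρ θ - 1‖ ^ (-γ) :=
    (((continuous_circleMap 0 ρ).sub continuous_const).norm).rpow_const
      fun θ => Or.inl (hNpos θ).ne'
  have hper : Function.Periodic (fun θ => ‖circleMap 0 ρ θ - 1‖ ^ (-γ)) (2*π) := by
    intro θ
    simp only [periodic_circleMap 0 ρ θ]
  have step1 : ∫ θ in (0:ℝ)..(2*π), ‖circleMap 0 ρ θ - 1‖ ^ (-γ)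
      = ∫ θ in (-π)..π, ‖circleMap 0 ρ θ - 1‖ ^ (-γ) := by
    have := hper.intervalIntegral_add_eq 0 (-π)
    rw [zero_add] at this
    rw [this, show -π + 2*π = π by ring]
  -- base comparison function
  set f : ℝ → ℝ := fun θ => (a + c * |θ|) ^ (-γ) with hf_def
  have hfpos : ∀ θ : ℝ, 0 < a + c * |θ| := by
    intro θ; have : 0 ≤ c * |θ| := by positivity
    linarith
  have hfcont : Continuous f :=
    (continuous_const.add (continuous_const.mul continuous_abs)).rpow_const
      fun θ => Or.inl (hfpos θ).ne'
  have hpt : ∀ θ ∈ Set.Icc (-π) π, ‖circleMap 0 ρ θ - 1‖ ^ (-γ) ≤ 2 ^ (γ/2) * f θ := by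
    intro θ hθ
    have habs : |θ| ≤ π := abs_le.2 ⟨hθ.1, hθ.2⟩
    have hkey := cc_pointwise hρ0 hρ1 habs
    have h2pos : (0:ℝ) < Real.sqrt 2 := by positivity
    have hdivpos : 0 < (a + c * |θ|) / Real.sqrt 2 := by positivity
    have hle : (a + c * |θ|) / Real.sqrt 2 ≤ ‖circleMap 0 ρ θ - 1‖ := by
      rw [div_le_iff₀ h2pos]
      linarith [hkey]
    have h1 : ‖circleMap 0 ρ θ - 1‖ ^ (-γ) ≤ ((a + c * |θ|) / Real.sqrt 2) ^ (-γ) :=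
      Real.rpow_le_rpow_of_nonpos hdivpos hle (by linarith)
    have h2 : ((a + c * |θ|) / Real.sqrt 2) ^ (-γ) = 2 ^ (γ/2) * f θ := by
      rw [Real.div_rpow (hfpos θ).le (Real.sqrt_nonneg 2)]
      rw [Real.sqrt_eq_rpow, ← Real.rpow_mul (by norm_num : (0:ℝ) ≤ 2)]
      rw [show (1/2) * (-γ) = -(γ/2) by ring, Real.rpow_neg (by norm_num : (0:ℝ) ≤ 2)]
      rw [division_def, inv_inv, mul_comm]
    rw [← h2]; exact h1
  have hint1 : IntervalIntegrable (fun θ => ‖circleMap 0 ρ θ - 1‖ ^ (-γ))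
      MeasureTheory.volume (-π) π := hcont1.intervalIntegrable _ _
  have hint2 : IntervalIntegrable (fun θ => 2 ^ (γ/2) * f θ) MeasureTheory.volume (-π) π :=
    (continuous_const.mul hfcont).intervalIntegrable _ _
  have step2 : ∫ θ in (-π)..π, ‖circleMap 0 ρ θ - 1‖ ^ (-γ)
      ≤ ∫ θ in (-π)..π, 2 ^ (γ/2) * f θ :=
    intervalIntegral.integral_mono_on (by linarith) hint1 hint2 hpt
  have hsplit : ∫ θ in (-π)..π, f θ = (∫ θ in (-π)..(0:ℝ), f θ) + ∫ θ in (0:ℝ)..π, f θ :=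
    (intervalIntegral.integral_add_adjacent_intervals
      (hfcont.intervalIntegrable _ _) (hfcont.intervalIntegrable _ _)).symm
  have hneg : ∫ θ in (-π)..(0:ℝ), f θ = ∫ θ in (0:ℝ)..π, f θ := by
    have := intervalIntegral.integral_comp_neg (a := (0:ℝ)) (b := π) f
    simp only [neg_zero] at this
    rw [← this]
    apply intervalIntegral.integral_congr
    intro θ _
    simp [hf_def, abs_neg]
  have hhalf : ∫ θ in (0:ℝ)..π, f θ = ∫ θ in (0:ℝ)..π, (a + c * θ) ^ (-γ) := by
    apply intervalIntegral.integral_congr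
    intro θ hθ
    rw [Set.uIcc_of_le (le_of_lt hπ)] at hθ
    simp only [hf_def, abs_of_nonneg hθ.1]
  have hftc : ∫ θ in (0:ℝ)..π, (a + c * θ) ^ (-γ) ≤ a ^ (1 - γ) / (c * (γ - 1)) :=
    cc_ftc_bound ha hc hγ hπ.le
  have step3 : ∫ θ in (-π)..π, 2 ^ (γ/2) * f θ ≤ 2 ^ (γ/2) * (2 * (a ^ (1 - γ) / (c * (γ - 1)))) := by
    rw [intervalIntegral.integral_const_mul]
    have : ∫ θ in (-π)..π, f θ ≤ 2 * (a ^ (1 - γ) / (c * (γ - 1))) := by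
      rw [hsplit, hneg, hhalf]
      linarith [hftc]
    have h2γ : (0:ℝ) ≤ 2 ^ (γ/2) := (Real.rpow_pos_of_pos (by norm_num) _).le
    exact mul_le_mul_of_nonneg_left this h2γ
  have hfin : 2 ^ (γ/2) * (2 * (a ^ (1 - γ) / (c * (γ - 1))))
      = 2 ^ (γ/2) * (π / (γ - 1)) * a ^ (1 - γ) / Real.sqrt ρ := by
    have hs : Real.sqrt ρ ≠ 0 := (Real.sqrt_pos.2 hρ0).ne'
    have hγ1 : γ - 1 ≠ 0 := by linarith
    rw [hc_def]
    field_simp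
  rw [step1]
  calc ∫ θ in (-π)..π, ‖circleMap 0 ρ θ - 1‖ ^ (-γ)
      ≤ ∫ θ in (-π)..π, 2 ^ (γ/2) * f θ := step2
    _ ≤ 2 ^ (γ/2) * (2 * (a ^ (1 - γ) / (c * (γ - 1)))) := step3
    _ = 2 ^ (γ/2) * (π / (γ - 1)) * a ^ (1 - γ) / Real.sqrt ρ := hfin

/-- Lemma B.2 (coefficient comparison): if `1/h = ∑ hₙ zⁿ` and `1/g = ∑ gₙ zⁿ` on the
disk of radius `r ≥ 1−ε`, with `|h|, |g| ≥ δ₁|z−1|^α` and `|h−g| ≤ δ₂|z−1|^β` for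
`|z| ≤ 1−ε`, `0 ≤ β ≤ 1`, `β < 2α−1`, then
`|hₙ − gₙ| ≤ (δ₂/((2α−β−1)δ₁²)) 2^{α−1−β/2} (1−ε)^{−n−1/2} ε^{β−2α+1}`. -/
theorem coefficient_comparison
    (ε r α β δ₁ δ₂ : ℝ) (hε : ε ∈ Set.Ioo (0 : ℝ) 1) (hr : 1 - ε ≤ r)
    (h g : ℂ → ℂ) (hc gc : ℕ → ℂ)
    (hhol : DifferentiableOn ℂ h (Metric.ball 0 r))
    (ghol : DifferentiableOn ℂ g (Metric.ball 0 r))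
    (hβ0 : 0 ≤ β) (hβ1 : β ≤ 1) (hβα : β < 2 * α - 1)
    (hδ₁ : 0 < δ₁) (hδ₂ : 0 < δ₂)
    (hsum : ∀ z : ℂ, ‖z‖ < r → HasSum (fun n : ℕ => hc n * z ^ n) (1 / h z))
    (gsum : ∀ z : ℂ, ‖z‖ < r → HasSum (fun n : ℕ => gc n * z ^ n) (1 / g z))
    (hlow : ∀ z : ℂ, ‖z‖ ≤ 1 - ε → δ₁ * ‖z - 1‖ ^ α ≤ ‖h z‖)
    (glow : ∀ z : ℂ, ‖z‖ ≤ 1 - ε → δ₁ * ‖z - 1‖ ^ α ≤ ‖g z‖)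
    (hdiff : ∀ z : ℂ, ‖z‖ ≤ 1 - ε → ‖h z - g z‖ ≤ δ₂ * ‖z - 1‖ ^ β) :
    ∀ n : ℕ, ‖hc n - gc n‖
      ≤ δ₂ / ((2 * α - β - 1) * δ₁ ^ 2) * (2 : ℝ) ^ (α - 1 - β / 2)
          * (1 - ε) ^ (-(n : ℝ) - 1 / 2) * ε ^ (β - 2 * α + 1) := by
  obtain ⟨hε0, hε1⟩ := hε
  have h1ε : (0:ℝ) < 1 - ε := by linarith
  intro n
  set γ : ℝ := 2 * α - β with hγ_def
  have hγ : 1 < γ := by simp only [hγ_def]; linarith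
  set F : ℂ → ℂ := fun z => 1 / h z - 1 / g z with hF_def
  set d : ℕ → ℂ := fun k => hc k - gc k with hd_def
  have hFsum : ∀ z : ℂ, ‖z‖ < r → HasSum (fun k : ℕ => d k * z ^ k) (F z) := by
    intro z hz
    have := (hsum z hz).sub (gsum z hz)
    simpa [hF_def, hd_def, sub_mul, one_div] using this
  -- nonvanishing on the closed ball of radius 1 - ε
  have hone : ∀ z : ℂ, ‖z‖ ≤ 1 - ε → ε ≤ ‖z - 1‖ := by
    intro z hz
    have h2 : ‖(1:ℂ)‖ - ‖z‖ ≤ ‖(1:ℂ) - z‖ := norm_sub_norm_le 1 z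
    rw [norm_one] at h2
    rw [norm_sub_rev]
    linarith
  have hhne : ∀ z : ℂ, ‖z‖ ≤ 1 - ε → h z ≠ 0 := by
    intro z hz he
    have h1 := hlow z hz
    rw [he, norm_zero] at h1
    have : (0:ℝ) < δ₁ * ‖z - 1‖ ^ α :=
      mul_pos hδ₁ (Real.rpow_pos_of_pos (lt_of_lt_of_le hε0 (hone z hz)) α)
    linarith
  have hgne : ∀ z : ℂ, ‖z‖ ≤ 1 - ε → g z ≠ 0 := by
    intro z hz he
    have h1 := glow z hz
    rw [he, norm_zero] at h1
    have : (0:ℝ) < δ₁ * ‖z - 1‖ ^ α :=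
      mul_pos hδ₁ (Real.rpow_pos_of_pos (lt_of_lt_of_le hε0 (hone z hz)) α)
    linarith
  -- bound on F
  have hFbound : ∀ z : ℂ, ‖z‖ ≤ 1 - ε → ‖F z‖ ≤ δ₂ / δ₁ ^ 2 * ‖z - 1‖ ^ (-γ) := by
    intro z hz
    have hz1 : (0:ℝ) < ‖z - 1‖ := lt_of_lt_of_le hε0 (hone z hz)
    have hh0 := hhne z hz
    have hg0 := hgne z hz
    have hFz : F z = (1 * g z - h z * 1) / (h z * g z) := by
      simp only [hF_def]
      rw [div_sub_div _ _ hh0 hg0]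
    have hnum : ‖1 * g z - h z * 1‖ ≤ δ₂ * ‖z - 1‖ ^ β := by
      rw [one_mul, mul_one, norm_sub_rev]
      exact hdiff z hz
    have hden : (δ₁ * ‖z - 1‖ ^ α) * (δ₁ * ‖z - 1‖ ^ α) ≤ ‖h z * g z‖ := by
      rw [norm_mul]
      exact mul_le_mul (hlow z hz) (glow z hz)
        (le_of_lt (mul_pos hδ₁ (Real.rpow_pos_of_pos hz1 α))) (norm_nonneg _)
    have hdpos : (0:ℝ) < (δ₁ * ‖z - 1‖ ^ α) * (δ₁ * ‖z - 1‖ ^ α) :=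
      mul_pos (mul_pos hδ₁ (Real.rpow_pos_of_pos hz1 α))
        (mul_pos hδ₁ (Real.rpow_pos_of_pos hz1 α))
    calc ‖F z‖ = ‖1 * g z - h z * 1‖ / ‖h z * g z‖ := by rw [hFz, norm_div]
      _ ≤ (δ₂ * ‖z - 1‖ ^ β) / ((δ₁ * ‖z - 1‖ ^ α) * (δ₁ * ‖z - 1‖ ^ α)) :=
          div_le_div₀ (by positivity) hnum hdpos hden
      _ = δ₂ / δ₁ ^ 2 * ‖z - 1‖ ^ (-γ) := by
          rw [show -γ = β - 2 * α by simp only [hγ_def]; ring, Real.rpow_sub hz1,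
            show (2:ℝ) * α = α + α by ring, Real.rpow_add hz1]
          field_simp
  -- main per-radius bound
  have key : ∀ ρ : ℝ, ρ ∈ Set.Ioo (0:ℝ) (1-ε) →
      ‖d n‖ ≤ δ₂ / ((γ - 1) * δ₁ ^ 2) * (2:ℝ) ^ (α - 1 - β / 2)
        * ρ ^ (-(n:ℝ) - 1/2) * (1 - ρ) ^ (β - 2 * α + 1) := by
    intro ρ hρ
    obtain ⟨hρ0, hρ1⟩ := hρ
    have hρ1' : ρ < 1 := by linarith
    set R₂ : ℝ := (ρ + (1 - ε)) / 2 with hR₂_def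
    have hρR : ρ < R₂ := by simp only [hR₂_def]; linarith
    have hR₂lt : R₂ < 1 - ε := by simp only [hR₂_def]; linarith
    have hR₂r : R₂ < r := lt_of_lt_of_le hR₂lt hr
    have hR₂0 : 0 < R₂ := lt_trans hρ0 hρR
    set p : FormalMultilinearSeries ℂ ℂ ℂ := FormalMultilinearSeries.ofScalars ℂ d with hp_def
    have hpnorm : ∀ k, ‖p k‖ = ‖d k‖ := fun k => FormalMultilinearSeries.ofScalars_norm ℂ d k
    have hrad : ENNReal.ofReal R₂ ≤ p.radius := by
      have hsum2 : Summable (fun k : ℕ => d k * (R₂ : ℂ) ^ k) := by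
        refine (hFsum (R₂ : ℂ) ?_).summable
        rw [Complex.norm_real, Real.norm_eq_abs, abs_of_pos hR₂0]
        exact hR₂r
      have h0 := hsum2.tendsto_atTop_zero
      have h0' : Filter.Tendsto (fun k => ‖p k‖ * ((R₂.toNNReal : ℝ)) ^ k)
          Filter.atTop (𝓝 0) := by
        have hn := h0.norm
        rw [norm_zero] at hn
        have heq : ∀ k : ℕ, ‖p k‖ * ((R₂.toNNReal : ℝ)) ^ k = ‖d k * (R₂ : ℂ) ^ k‖ := by
          intro k
          rw [hpnorm k, Real.coe_toNNReal _ hR₂0.le, norm_mul, norm_pow]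
          congr 1
          rw [Complex.norm_real, Real.norm_eq_abs, abs_of_pos hR₂0]
        simpa only [heq] using hn
      have := p.le_radius_of_tendsto h0'
      rwa [ENNReal.ofReal]
    have hball : HasFPowerSeriesOnBall F p 0 (ENNReal.ofReal R₂) := by
      refine ⟨hrad, by simp [ENNReal.ofReal_pos, hR₂0], ?_⟩
      intro y hy
      rw [Metric.emetric_ball, Metric.mem_ball, dist_zero_right] at hy
      rw [zero_add]
      have := hFsum y (lt_trans hy hR₂r)
      simp only [hp_def, FormalMultilinearSeries.ofScalars_apply_eq, smul_eq_mul]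
      exact this
    have hFdiff : DifferentiableOn ℂ F (Metric.closedBall 0 ρ) := by
      apply hball.differentiableOn.mono
      intro z hz
      rw [Metric.emetric_ball, Metric.mem_ball, dist_zero_right]
      rw [Metric.mem_closedBall, dist_zero_right] at hz
      exact lt_of_le_of_lt hz hρR
    have hρnn : 0 < ρ.toNNReal := Real.toNNReal_pos.2 hρ0
    have hFdiff' : DifferentiableOn ℂ F (Metric.closedBall 0 (ρ.toNNReal : ℝ)) := by
      rwa [Real.coe_toNNReal _ hρ0.le]
    have hcau := hFdiff'.hasFPowerSeriesOnBall hρnn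
    have hpe : p = cauchyPowerSeries F 0 (ρ.toNNReal : ℝ) :=
      hball.hasFPowerSeriesAt.eq_formalMultilinearSeries hcau.hasFPowerSeriesAt
    have hpe' : p = cauchyPowerSeries F 0 ρ := by
      rwa [Real.coe_toNNReal _ hρ0.le] at hpe
    -- norm of the coefficient
    have hdn : ‖d n‖ ≤ ‖cauchyPowerSeries F 0 ρ n‖ := by
      have h1 : d n = p n (fun _ => (1:ℂ)) := by
        rw [hp_def, FormalMultilinearSeries.ofScalars_apply_eq]
        simp
      rw [h1, hpe']
      calc ‖cauchyPowerSeries F 0 ρ n (fun _ => (1:ℂ))‖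
          ≤ ‖cauchyPowerSeries F 0 ρ n‖ * ∏ _i : Fin n, ‖(1:ℂ)‖ :=
            ContinuousMultilinearMap.le_opNorm _ _
        _ = ‖cauchyPowerSeries F 0 ρ n‖ := by simp
    have hcnorm := norm_cauchyPowerSeries_le F 0 ρ n
    -- bound the circle integral of ‖F‖
    have hmem : ∀ θ : ℝ, circleMap 0 ρ θ ∈ Metric.ball (0:ℂ) r := by
      intro θ
      rw [Metric.mem_ball, dist_zero_right, norm_circleMap_zero,
        abs_of_pos hρ0]
      linarith
    have hnormle : ∀ θ : ℝ, ‖circleMap 0 ρ θ‖ ≤ 1 - ε := by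
      intro θ
      rw [norm_circleMap_zero, abs_of_pos hρ0]
      linarith
    have hch : Continuous fun θ => h (circleMap 0 ρ θ) :=
      hhol.continuousOn.comp_continuous (continuous_circleMap 0 ρ) hmem
    have hcg : Continuous fun θ => g (circleMap 0 ρ θ) :=
      ghol.continuousOn.comp_continuous (continuous_circleMap 0 ρ) hmem
    have hcF : Continuous fun θ => F (circleMap 0 ρ θ) := by
      simp only [hF_def]
      exact (continuous_const.div hch fun θ => hhne _ (hnormle θ)).sub
        (continuous_const.div hcg fun θ => hgne _ (hnormle θ))
    have hNpos : ∀ θ : ℝ, (0:ℝ) < ‖circleMap 0 ρ θ - 1‖ :=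
      fun θ => lt_of_lt_of_le hε0 (hone _ (hnormle θ))
    have hcR : Continuous fun θ => δ₂ / δ₁ ^ 2 * ‖circleMap 0 ρ θ - 1‖ ^ (-γ) :=
      continuous_const.mul ((((continuous_circleMap 0 ρ).sub continuous_const).norm).rpow_const
        fun θ => Or.inl (hNpos θ).ne')
    have hIb : (∫ θ in (0:ℝ)..2*π, ‖F (circleMap 0 ρ θ)‖)
        ≤ δ₂ / δ₁ ^ 2 * (2 ^ (γ/2) * (π / (γ - 1)) * (1 - ρ) ^ (1 - γ) / Real.sqrt ρ) := by
      have hmono : (∫ θ in (0:ℝ)..2*π, ‖F (circleMap 0 ρ θ)‖)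
          ≤ ∫ θ in (0:ℝ)..2*π, δ₂ / δ₁ ^ 2 * ‖circleMap 0 ρ θ - 1‖ ^ (-γ) := by
        apply intervalIntegral.integral_mono_on (by positivity)
          (hcF.norm.intervalIntegrable _ _) (hcR.intervalIntegrable _ _)
        intro θ _
        exact hFbound _ (hnormle θ)
      have h2 : (∫ θ in (0:ℝ)..2*π, δ₂ / δ₁ ^ 2 * ‖circleMap 0 ρ θ - 1‖ ^ (-γ))
          = δ₂ / δ₁ ^ 2 * ∫ θ in (0:ℝ)..2*π, ‖circleMap 0 ρ θ - 1‖ ^ (-γ) :=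
        intervalIntegral.integral_const_mul _ _
      have h3 := cc_circle_integral_bound hρ0 hρ1' hγ
      calc (∫ θ in (0:ℝ)..2*π, ‖F (circleMap 0 ρ θ)‖)
          ≤ δ₂ / δ₁ ^ 2 * ∫ θ in (0:ℝ)..2*π, ‖circleMap 0 ρ θ - 1‖ ^ (-γ) := by
            rw [← h2]; exact hmono
        _ ≤ δ₂ / δ₁ ^ 2 * (2 ^ (γ/2) * (π / (γ - 1)) * (1 - ρ) ^ (1 - γ) / Real.sqrt ρ) :=
            mul_le_mul_of_nonneg_left h3 (by positivity)
    -- combine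
    have hfinal : ‖d n‖ ≤ ((2*π)⁻¹ *
        (δ₂ / δ₁ ^ 2 * (2 ^ (γ/2) * (π / (γ - 1)) * (1 - ρ) ^ (1 - γ) / Real.sqrt ρ)))
        * |ρ|⁻¹ ^ n := by
      refine le_trans (le_trans hdn hcnorm) ?_
      have hpn : (0:ℝ) ≤ |ρ|⁻¹ ^ n := by positivity
      apply mul_le_mul_of_nonneg_right _ hpn
      exact mul_le_mul_of_nonneg_left hIb (by positivity)
    -- algebraic identification
    have e1 : ρ ^ (-(n:ℝ) - 1/2) = (ρ⁻¹) ^ n * (Real.sqrt ρ)⁻¹ := by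
      rw [show -(n:ℝ) - 1/2 = (-(n:ℝ)) + (-(1/2)) by ring, Real.rpow_add hρ0,
        Real.rpow_neg hρ0.le, Real.rpow_natCast, Real.rpow_neg hρ0.le,
        Real.sqrt_eq_rpow, inv_pow]
    have e2 : (2:ℝ) ^ (α - 1 - β/2) = 2 ^ (γ/2) / 2 := by
      rw [show α - 1 - β/2 = γ/2 - 1 by simp only [hγ_def]; ring,
        Real.rpow_sub (by norm_num), Real.rpow_one]
    have e3 : (1 - ρ) ^ (β - 2*α + 1) = (1 - ρ) ^ (1 - γ) := by
      congr 1
      simp only [hγ_def]; ring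
    rw [abs_of_pos hρ0] at hfinal
    refine le_trans hfinal (le_of_eq ?_)
    rw [e1, e2, e3]
    have hπ := Real.pi_pos
    have hs : Real.sqrt ρ ≠ 0 := (Real.sqrt_pos.2 hρ0).ne'
    have hγ1 : γ - 1 ≠ 0 := by linarith
    field_simp
  -- limit ρ → 1 - ε
  have c1 : ContinuousAt (fun x : ℝ => x ^ (-(n:ℝ) - 1/2)) (1 - ε) :=
    Real.continuousAt_rpow_const _ _ (Or.inl h1ε.ne')
  have c2 : ContinuousAt (fun x : ℝ => (1 - x) ^ (β - 2*α + 1)) (1 - ε) := by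
    have hbase : ContinuousAt (fun x : ℝ => 1 - x) (1 - ε) :=
      (continuous_const.sub continuous_id).continuousAt
    have : ContinuousAt (fun y : ℝ => y ^ (β - 2*α + 1)) (1 - (1 - ε)) := by
      apply Real.continuousAt_rpow_const
      left
      simp only [sub_sub_cancel]
      exact hε0.ne'
    exact this.comp hbase
  have hT : Filter.Tendsto
      (fun x : ℝ => δ₂ / ((γ - 1) * δ₁ ^ 2) * (2:ℝ) ^ (α - 1 - β / 2)
        * x ^ (-(n:ℝ) - 1/2) * (1 - x) ^ (β - 2 * α + 1))
      (nhdsWithin (1 - ε) (Set.Iio (1 - ε)))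
      (𝓝 (δ₂ / ((γ - 1) * δ₁ ^ 2) * (2:ℝ) ^ (α - 1 - β / 2)
        * (1 - ε) ^ (-(n:ℝ) - 1/2) * (1 - (1 - ε)) ^ (β - 2 * α + 1))) := by
    exact (((continuousAt_const.mul c1).mul c2)).tendsto.mono_left nhdsWithin_le_nhds
  have hev : ∀ᶠ x in nhdsWithin (1 - ε) (Set.Iio (1 - ε)),
      ‖d n‖ ≤ δ₂ / ((γ - 1) * δ₁ ^ 2) * (2:ℝ) ^ (α - 1 - β / 2)
        * x ^ (-(n:ℝ) - 1/2) * (1 - x) ^ (β - 2 * α + 1) :=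
    Filter.eventually_of_mem (Ioo_mem_nhdsLT h1ε) fun x hx => key x hx
  have hres := ge_of_tendsto hT hev
  rw [sub_sub_cancel] at hres
  have hgoal : γ - 1 = 2 * α - β - 1 := by simp only [hγ_def]
  rw [hγ_def] at hres
  convert hres using 3
end
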